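/- The 8-vertex matrix R(q) = (q+1)^{-1} · [[1,0,0,nq],[0,m,q,0],[0,q,m,0],[nq,0,0,1]] with m^2 = n^2 = 1 satisfies the quantum Yang–Baxter equation R_{12} R_{13} R_{23} = R_{23} R_{13} R_{12}, for every q ≠ -1. -/

import Mathlib

section YBEAux

variable {K : Type*} [Field K]

private lemma qybe_triL (A : Matrix (Fin 2 × Fin 2) (Fin 2 × Fin 2) K)
    (A12 A13 A23 : Matrix (Fin 2 × Fin 2 × Fin 2) (Fin 2 × Fin 2 × Fin 2) K)
    (h12 : A12 = fun s r => A (s.1, s.2.1) (r.1, r.2.1) * (if s.2.2 = r.2.2 then 1 else 0))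
    (h13 : A13 = fun s r => A (s.1, s.2.2) (r.1, r.2.2) * (if s.2.1 = r.2.1 then 1 else 0))
    (h23 : A23 = fun s r => A (s.2.1, s.2.2) (r.2.1, r.2.2) * (if s.1 = r.1 then 1 else 0))
    (a b c d e f : Fin 2) :
    (A12 * A13 * A23) (a,b,c) (d,e,f)
      = ∑ x, ∑ y, ∑ w, A (a,b) (x,y) * A (x,c) (d,w) * A (y,w) (e,f) := by
  simp only [Matrix.mul_apply]
  subst h12 h13 h23
  fin_cases c <;> fin_cases d <;>
    simp only [Matrix.mul_apply, Fintype.sum_prod_type, Fin.sum_univ_two] <;>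
    norm_num <;> ring

private lemma qybe_triR (A : Matrix (Fin 2 × Fin 2) (Fin 2 × Fin 2) K)
    (A12 A13 A23 : Matrix (Fin 2 × Fin 2 × Fin 2) (Fin 2 × Fin 2 × Fin 2) K)
    (h12 : A12 = fun s r => A (s.1, s.2.1) (r.1, r.2.1) * (if s.2.2 = r.2.2 then 1 else 0))
    (h13 : A13 = fun s r => A (s.1, s.2.2) (r.1, r.2.2) * (if s.2.1 = r.2.1 then 1 else 0))
    (h23 : A23 = fun s r => A (s.2.1, s.2.2) (r.2.1, r.2.2) * (if s.1 = r.1 then 1 else 0))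
    (a b c d e f : Fin 2) :
    (A23 * A13 * A12) (a,b,c) (d,e,f)
      = ∑ v, ∑ w, ∑ x, A (b,c) (v,w) * A (a,w) (x,f) * A (x,v) (d,e) := by
  simp only [Matrix.mul_apply]
  subst h12 h13 h23
  fin_cases a <;> fin_cases f <;>
    simp only [Matrix.mul_apply, Fintype.sum_prod_type, Fin.sum_univ_two] <;>
    norm_num <;> ring

end YBEAux

set_option maxHeartbeats 4000000 in
/-- The 8-vertex R-matrix `R(q) = (q+1)⁻¹·[[1,0,0,nq],[0,m,q,0],[0,q,m,0],[nq,0,0,1]]`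
with `m² = n² = 1` satisfies the quantum Yang–Baxter equation, for every `q ≠ -1`. -/
theorem eight_vertex_qybe {K : Type*} [Field K] [CharZero K] (m n q : K)
    (hm : m ^ 2 = 1) (hn : n ^ 2 = 1) (hq : q ≠ -1) :
    let R : Matrix (Fin 2 × Fin 2) (Fin 2 × Fin 2) K := fun s r =>
      (q + 1)⁻¹ *
      (if s = (0,0) ∧ r = (0,0) then 1
      else if s = (0,0) ∧ r = (1,1) then n * q
      else if s = (0,1) ∧ r = (0,1) then m
      else if s = (0,1) ∧ r = (1,0) then q
      else if s = (1,0) ∧ r = (0,1) then q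
      else if s = (1,0) ∧ r = (1,0) then m
      else if s = (1,1) ∧ r = (0,0) then n * q
      else if s = (1,1) ∧ r = (1,1) then 1
      else 0)
    let R12 : Matrix (Fin 2 × Fin 2 × Fin 2) (Fin 2 × Fin 2 × Fin 2) K :=
      fun a b => R (a.1, a.2.1) (b.1, b.2.1) * (if a.2.2 = b.2.2 then 1 else 0)
    let R13 : Matrix (Fin 2 × Fin 2 × Fin 2) (Fin 2 × Fin 2 × Fin 2) K :=
      fun a b => R (a.1, a.2.2) (b.1, b.2.2) * (if a.2.1 = b.2.1 then 1 else 0)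
    let R23 : Matrix (Fin 2 × Fin 2 × Fin 2) (Fin 2 × Fin 2 × Fin 2) K :=
      fun a b => R (a.2.1, a.2.2) (b.2.1, b.2.2) * (if a.1 = b.1 then 1 else 0)
    R12 * R13 * R23 = R23 * R13 * R12 := by
  intro R R12 R13 R23
  have hm3 : m ^ 3 = m := by linear_combination m * hm
  have hn3 : n ^ 3 = n := by linear_combination n * hn
  ext ⟨a, b, c⟩ ⟨d, e, f⟩
  rw [qybe_triL R R12 R13 R23 rfl rfl rfl, qybe_triR R R12 R13 R23 rfl rfl rfl]
  fin_cases a <;> fin_cases b <;> fin_cases c <;> fin_cases d <;> fin_cases e <;> fin_cases f <;>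
    simp only [R, Fin.sum_univ_two] <;>
    norm_num [Prod.ext_iff] <;>
    ring_nf <;> (try simp only [hm, hm3, hn, hn3]) <;> (try ring)
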